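/- Let n be a positive integer, α, β, γ, δ ∈ ℝ with associated constants c₁ = α + δ and c₂ = βγ − αδ, and let U, V : ℝ → M_n(ℝ) be matrix-valued functions such that U is twice differentiable, V is differentiable, and they satisfy the system (4.2): U' = αU + βV and V' = [U,V] + γU + δV, where [A,B] = AB − BA. Then U satisfies the second-order equation (4.3): U'' = [U, U'] + c₁ U' + c₂ U. -/
import Mathlib


/-- If matrix-valued functions `U, V` satisfy the system (4.2)
`U' = αU + βV`, `V' = [U,V] + γU + δV`, then `U` satisfies the second-order
equation (4.3) `U'' = [U,U'] + c₁U' + c₂U` with `c₁ = α + δ`, `c₂ = βγ − αδ`.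
Differentiation of matrix-valued functions is entrywise. -/
theorem stmt_18 (n : ℕ) (hn : 0 < n) (α β γ δ c₁ c₂ : ℝ)
    (hc₁ : c₁ = α + δ) (hc₂ : c₂ = β * γ - α * δ)
    (U U' U'' V V' : ℝ → Matrix (Fin n) (Fin n) ℝ)
    (hU' : ∀ t i j, HasDerivAt (fun s => U s i j) (U' t i j) t)
    (hU'' : ∀ t i j, HasDerivAt (fun s => U' s i j) (U'' t i j) t)
    (hV' : ∀ t i j, HasDerivAt (fun s => V s i j) (V' t i j) t)
    (heqU : ∀ t, U' t = α • U t + β • V t)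
    (heqV : ∀ t, V' t = (U t * V t - V t * U t) + γ • U t + δ • V t) :
    ∀ t, U'' t = (U t * U' t - U' t * U t) + c₁ • U' t + c₂ • U t := by
  have key : ∀ t i j, U'' t i j = α * U' t i j + β * V' t i j := by
    intro t i j
    have hf : (fun s => U' s i j) = (fun s => α * U s i j + β * V s i j) := by
      funext s
      rw [heqU]
      simp [Matrix.add_apply, Matrix.smul_apply]
    have h1 : HasDerivAt (fun s => U' s i j) (α * U' t i j + β * V' t i j) t := by
      rw [hf]
      exact ((hU' t i j).const_mul α).add ((hV' t i j).const_mul β)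
    exact (hU'' t i j).unique h1
  have hm : ∀ t, α • U' t + β • V' t
      = (U t * U' t - U' t * U t) + c₁ • U' t + c₂ • U t := by
    intro t
    rw [heqV, heqU, hc₁, hc₂]
    simp only [mul_add, add_mul, mul_sub, sub_mul, mul_smul_comm, smul_mul_assoc,
      smul_add, smul_sub, smul_smul]
    match_scalars <;> ring
  intro t
  ext i j
  calc U'' t i j = α * U' t i j + β * V' t i j := key t i j
    _ = (α • U' t + β • V' t) i j := by simp
    _ = _ := by rw [hm t]
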